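/- For every i = 1,…,n, the operator T_i on ℚFl(V) satisfies the quadratic Hecke relation T_i² = (q−1)·T_i + q·id. -/

import Mathlib

/-!
Let `q` be a prime power and `F = 𝔽_q` the field with `q` elements (formalized as an
arbitrary finite field `F` with `Fintype.card F = q`), `n ≥ 1`, `V = F^(n+1)`.
`CompleteFlag F n` is the set of complete flags `0 = V₀ ⊂ V₁ ⊂ ⋯ ⊂ V_{n+1} = V`
with `dim Vᵢ = i`.  `T i` is the linear operator on the ℚ-vector space of functions on
flags (with the flags as the standard basis) sending a flag to the sum of all flags
differing from it exactly at position `i`.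

STATEMENT 0: for every `i = 1, …, n` the quadratic Hecke relation
`T i ∘ T i = (q - 1) • T i + q • id` holds.
-/

/-- A complete flag `0 = V₀ ⊂ V₁ ⊂ ⋯ ⊂ V_{n+1} = V` of subspaces of `V = F^(n+1)`,
with `dim Vᵢ = i`. -/
structure CompleteFlag (F : Type) [Field F] (n : ℕ) where
  toFun : Fin (n + 2) → Submodule F (Fin (n + 1) → F)
  mono : Monotone toFun
  rank : ∀ i : Fin (n + 2), Module.finrank F (toFun i) = (i : ℕ)

instance (F : Type) [Field F] [Fintype F] (n : ℕ) : Finite (CompleteFlag F n) := by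
  have : Finite (Submodule F (Fin (n + 1) → F)) :=
    Finite.of_injective (fun s => (s : Set (Fin (n + 1) → F))) SetLike.coe_injective
  exact Finite.of_injective (fun W => W.toFun)
    (fun W W' h => by cases W; cases W'; simpa using h)

noncomputable instance (F : Type) [Field F] [Fintype F] (n : ℕ) :
    Fintype (CompleteFlag F n) := Fintype.ofFinite _

open Classical in
/-- The operator `Tᵢ` on `ℚ Fl(V)`: it sends a flag `(V_j)_j` to the sum of all flags
`(V_j')_j` with `V_j' = V_j` for `j ≠ i` and `V_i' ≠ V_i`. -/
noncomputable def T (F : Type) [Field F] [Fintype F] (n : ℕ) (i : Fin (n + 2)) :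
    (CompleteFlag F n → ℚ) →ₗ[ℚ] (CompleteFlag F n → ℚ) where
  toFun f := fun W => ∑ V : CompleteFlag F n,
    if (∀ j, j ≠ i → V.toFun j = W.toFun j) ∧ V.toFun i ≠ W.toFun i then f V else 0
  map_add' f g := by
    funext W
    show _ = (∑ V : CompleteFlag F n, (_ : ℚ)) + (∑ V : CompleteFlag F n, (_ : ℚ))
    rw [← Finset.sum_add_distrib]
    refine Finset.sum_congr rfl fun V _ => ?_
    split <;> simp
  map_smul' c f := by
    funext W
    show _ = c • ∑ V : CompleteFlag F n, (_ : ℚ)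
    simp only [smul_eq_mul, Finset.mul_sum]
    refine Finset.sum_congr rfl fun V _ => ?_
    split <;> simp



open Module Finset

lemma natCard_intermediate {F M : Type} [Field F] [Fintype F] [AddCommGroup M] [Module F M]
    [Fintype M] (A B : Submodule F M) (k : ℕ)
    (hAB : A ≤ B) (hA : finrank F A = k) (hB : finrank F B = k + 2) :
    Nat.card {X : Submodule F M // A ≤ X ∧ X ≤ B ∧ finrank F X = k + 1}
      = Fintype.card F + 1 := by
  classical
  have hFD : FiniteDimensional F M := Module.Finite.of_injective
    (LinearMap.id : M →ₗ[F] M) fun a b h => h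
  have : Fintype (Submodule F M) := Fintype.ofFinite _
  set q := Fintype.card F with hq
  have hQ2 : 2 ≤ q := Fintype.one_lt_card
  have hfil : ∀ X : Submodule F M, (univ.filter (fun v => v ∈ X)).card = q ^ finrank F X := by
    intro X
    have h1 : (univ.filter (fun v => v ∈ X)).card = Nat.card {v // v ∈ X} := by
      rw [← Fintype.card_subtype, Fintype.card_eq_nat_card]
    rw [h1, Nat.card_eq_fintype_card, card_eq_pow_finrank (K := F)]
  -- key finrank computation
  have key : ∀ v : M, v ∉ A → finrank F ↥(A ⊔ Submodule.span F {v}) = k + 1 := by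
    intro v hvA
    have hv0 : v ≠ 0 := fun h => hvA (h ▸ A.zero_mem)
    have hinf : A ⊓ Submodule.span F {v} = ⊥ := by
      rw [eq_bot_iff]
      rintro x ⟨hxA, hxs⟩
      obtain ⟨c, rfl⟩ := Submodule.mem_span_singleton.mp hxs
      rcases eq_or_ne c 0 with hc | hc
      · simp [hc]
      · exact absurd (by simpa [hc] using A.smul_mem c⁻¹ hxA) hvA
    have h := Submodule.finrank_sup_add_finrank_inf_eq A (Submodule.span F {v})
    rw [hinf, finrank_bot, finrank_span_singleton hv0, hA] at h
    omega
  set S : Finset M := univ.filter (fun v => v ∈ B ∧ v ∉ A) with hSdef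
  set L : Finset (Submodule F M) :=
    univ.filter (fun X => A ≤ X ∧ X ≤ B ∧ finrank F X = k + 1) with hLdef
  have cardsub : ∀ X : Submodule F M, A ≤ X →
      ((univ.filter (fun v => v ∈ X)) \ (univ.filter (fun v => v ∈ A))).card
        = q ^ finrank F X - q ^ k := by
    intro X hAX
    rw [card_sdiff_of_subset (monotone_filter_right _ (fun v _ hv => hAX hv)), hfil, hfil, hA]
  have hS : S.card = q ^ (k + 2) - q ^ k := by
    have : S = (univ.filter (fun v => v ∈ B)) \ (univ.filter (fun v => v ∈ A)) := by
      ext v; simp [hSdef]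
    rw [this, cardsub B hAB, hB]
  have hmem : ∀ v ∈ S, A ⊔ Submodule.span F {v} ∈ L := by
    intro v hv
    rw [hSdef, mem_filter] at hv
    obtain ⟨-, hvB, hvA⟩ := hv
    rw [hLdef, mem_filter]
    exact ⟨mem_univ _, le_sup_left,
      sup_le hAB (Submodule.span_le.mpr (by simpa using hvB)), key v hvA⟩
  have hfiber : ∀ X ∈ L, (S.filter (fun v => A ⊔ Submodule.span F {v} = X)).card
      = q ^ (k + 1) - q ^ k := by
    intro X hX
    rw [hLdef, mem_filter] at hX
    obtain ⟨-, hAX, hXB, hXr⟩ := hX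
    have hset : S.filter (fun v => A ⊔ Submodule.span F {v} = X)
        = (univ.filter (fun v => v ∈ X)) \ (univ.filter (fun v => v ∈ A)) := by
      ext v
      simp only [hSdef, mem_filter, mem_univ, true_and, mem_sdiff]
      constructor
      · rintro ⟨⟨hvB, hvA⟩, hfv⟩
        exact ⟨hfv ▸ Submodule.mem_sup_right (Submodule.mem_span_singleton_self v), hvA⟩
      · rintro ⟨hvX, hvA⟩
        refine ⟨⟨hXB hvX, hvA⟩, ?_⟩
        refine Submodule.eq_of_le_of_finrank_eq
          (sup_le hAX (Submodule.span_le.mpr (by simpa using hvX))) ?_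
        rw [key v hvA, hXr]
    rw [hset, cardsub X hAX, hXr]
  have hsum : S.card = L.card * (q ^ (k + 1) - q ^ k) := by
    rw [card_eq_sum_card_fiberwise hmem]
    rw [sum_congr rfl hfiber, sum_const, smul_eq_mul]
  have hd : 0 < q ^ (k + 1) - q ^ k := by
    have := Nat.pow_lt_pow_right (show 1 < q by omega) k.lt_add_one
    omega
  have hkey2 : (q + 1) * (q ^ (k + 1) - q ^ k) = q ^ (k + 2) - q ^ k := by
    have h1 : q ^ k ≤ q ^ (k + 1) := Nat.pow_le_pow_right (by omega) (by omega)
    have h2 : q ^ k ≤ q ^ (k + 2) := Nat.pow_le_pow_right (by omega) (by omega)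
    zify [h1, h2]
    ring
  have hL : L.card = q + 1 :=
    Nat.eq_of_mul_eq_mul_right hd (by rw [← hsum, hS, hkey2])
  rw [← hL, Nat.card_eq_fintype_card, Fintype.card_subtype]

section Flags

variable {F : Type} [Field F] [Fintype F] {n : ℕ}

omit [Fintype F] in
lemma CompleteFlag.ext' {V W : CompleteFlag F n} (h : V.toFun = W.toFun) : V = W := by
  cases V; cases W; simpa using h

/-- Replace the `i`-th subspace of a flag. -/
noncomputable def updFlag (W : CompleteFlag F n) (i : Fin (n + 2)) (hi1 : 1 ≤ (i : ℕ))
    (hi2 : (i : ℕ) ≤ n) (X : Submodule F (Fin (n + 1) → F))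
    (h1 : W.toFun ⟨(i : ℕ) - 1, by omega⟩ ≤ X)
    (h2 : X ≤ W.toFun ⟨(i : ℕ) + 1, by omega⟩)
    (h3 : Module.finrank F X = (i : ℕ)) : CompleteFlag F n where
  toFun := Function.update W.toFun i X
  mono := by
    apply Fin.monotone_iff_le_succ.mpr
    intro j
    by_cases hc : j.castSucc = i
    · have hs : j.succ ≠ i := by
        intro h
        exact absurd (h.trans hc.symm) (Fin.castSucc_lt_succ : j.castSucc < j.succ).ne'
      rw [hc, Function.update_self, Function.update_of_ne hs]
      have hv : (j : ℕ) = (i : ℕ) := congrArg Fin.val hc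
      have : j.succ = (⟨(i : ℕ) + 1, by omega⟩ : Fin (n + 2)) := Fin.ext (by simp [hv])
      rw [this]; exact h2
    · by_cases hs : j.succ = i
      · rw [hs, Function.update_self, Function.update_of_ne hc]
        have hv : (j : ℕ) + 1 = (i : ℕ) := congrArg Fin.val hs
        have : j.castSucc = (⟨(i : ℕ) - 1, by omega⟩ : Fin (n + 2)) :=
          Fin.ext (show (j : ℕ) = (i : ℕ) - 1 by omega)
        rw [this]; exact h1
      · rw [Function.update_of_ne hc, Function.update_of_ne hs]
        exact W.mono (Fin.castSucc_le_succ j)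
  rank := by
    intro j
    by_cases h : j = i
    · subst h; rw [Function.update_self]; exact h3
    · rw [Function.update_of_ne h]; exact W.rank j

open Module Finset in
lemma natCard_full (W : CompleteFlag F n) (i : Fin (n + 2)) (hi1 : 1 ≤ (i : ℕ))
    (hi2 : (i : ℕ) ≤ n) :
    Nat.card {V : CompleteFlag F n // ∀ j, j ≠ i → V.toFun j = W.toFun j}
      = Fintype.card F + 1 := by
  classical
  have him : ((i : ℕ) - 1) < n + 2 := by omega
  have hip : ((i : ℕ) + 1) < n + 2 := by omega
  have hne1 : (⟨(i : ℕ) - 1, him⟩ : Fin (n + 2)) ≠ i := fun h => by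
    have h2 : (i : ℕ) - 1 = (i : ℕ) := congrArg Fin.val h
    omega
  have hne2 : (⟨(i : ℕ) + 1, hip⟩ : Fin (n + 2)) ≠ i := fun h => by
    have h2 : (i : ℕ) + 1 = (i : ℕ) := congrArg Fin.val h
    omega
  have e : {V : CompleteFlag F n // ∀ j, j ≠ i → V.toFun j = W.toFun j}
      ≃ {X : Submodule F (Fin (n + 1) → F) //
          W.toFun ⟨(i : ℕ) - 1, him⟩ ≤ X ∧ X ≤ W.toFun ⟨(i : ℕ) + 1, hip⟩ ∧
            finrank F X = ((i : ℕ) - 1) + 1} := by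
    refine ⟨fun V => ⟨V.1.toFun i, ?_, ?_, ?_⟩,
      fun X => ⟨updFlag W i hi1 hi2 X.1 X.2.1 X.2.2.1
        (by rw [X.2.2.2]; omega), fun j hj => Function.update_of_ne hj _ _⟩, ?_, ?_⟩
    · rw [← V.2 _ hne1]
      exact V.1.mono (Fin.le_def.mpr (show (i : ℕ) - 1 ≤ (i : ℕ) by omega))
    · rw [← V.2 _ hne2]
      exact V.1.mono (Fin.le_def.mpr (show (i : ℕ) ≤ (i : ℕ) + 1 by omega))
    · rw [V.1.rank i]; omega
    · rintro ⟨V, hV⟩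
      apply Subtype.ext
      apply CompleteFlag.ext'
      funext j
      show Function.update W.toFun i (V.toFun i) j = V.toFun j
      by_cases h : j = i
      · subst h; rw [Function.update_self]
      · rw [Function.update_of_ne h]; exact (hV j h).symm
    · rintro ⟨X, hX⟩
      apply Subtype.ext
      show Function.update W.toFun i X i = X
      rw [Function.update_self]
  rw [Nat.card_congr e]
  exact natCard_intermediate _ _ ((i : ℕ) - 1)
    (W.mono (Fin.le_def.mpr (show (i : ℕ) - 1 ≤ (i : ℕ) + 1 by omega)))
    (by rw [W.rank])
    (by rw [W.rank]; exact (show (i : ℕ) + 1 = (i : ℕ) - 1 + 2 by omega))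

end Flags

open Finset in
/-- For `i = 1, …, n`, the operator `Tᵢ` satisfies the quadratic
Hecke relation `Tᵢ² = (q − 1)·Tᵢ + q·id`, where `q = |F|`. -/
theorem hecke_quadratic_relation (F : Type) [Field F] [Fintype F] (n : ℕ) (hn : 1 ≤ n)
    (i : Fin (n + 2)) (hi1 : 1 ≤ (i : ℕ)) (hi2 : (i : ℕ) ≤ n) :
    (T F n i) ∘ₗ (T F n i)
      = ((Fintype.card F : ℚ) - 1) • T F n i
        + (Fintype.card F : ℚ) • (LinearMap.id : (CompleteFlag F n → ℚ) →ₗ[ℚ] _) := by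
  classical
  set q := Fintype.card F with hq
  have hq1 : 1 ≤ q := Fintype.card_pos
  have flag_eq : ∀ V U : CompleteFlag F n,
      (∀ j, j ≠ i → V.toFun j = U.toFun j) → V.toFun i = U.toFun i → V = U := by
    intro V U h1 h2
    apply CompleteFlag.ext'
    funext j
    by_cases h : j = i
    · rw [h]; exact h2
    · exact h1 j h
  apply LinearMap.ext
  intro f
  funext W
  simp only [LinearMap.comp_apply, LinearMap.add_apply, LinearMap.smul_apply,
    LinearMap.id_apply, Pi.add_apply, Pi.smul_apply, smul_eq_mul, T,
    LinearMap.coe_mk, AddHom.coe_mk]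
  have hFullcard :
      (univ.filter fun V : CompleteFlag F n => ∀ j, j ≠ i → V.toFun j = W.toFun j).card
        = q + 1 := by
    rw [← Fintype.card_subtype, Fintype.card_eq_nat_card]
    exact natCard_full W i hi1 hi2
  have hstep : ∀ V : CompleteFlag F n,
      (if (∀ j, j ≠ i → V.toFun j = W.toFun j) ∧ V.toFun i ≠ W.toFun i then
          ∑ U : CompleteFlag F n,
            if (∀ j, j ≠ i → U.toFun j = V.toFun j) ∧ U.toFun i ≠ V.toFun i then f U else 0
        else 0)
      = ∑ U : CompleteFlag F n,
          if ((∀ j, j ≠ i → V.toFun j = W.toFun j) ∧ V.toFun i ≠ W.toFun i) ∧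
             ((∀ j, j ≠ i → U.toFun j = V.toFun j) ∧ U.toFun i ≠ V.toFun i) then f U else 0 := by
    intro V
    split_ifs with h
    · exact Finset.sum_congr rfl fun U _ => if_congr (and_iff_right h).symm rfl rfl
    · exact (Finset.sum_eq_zero fun U _ => by simp [h]).symm
  rw [Finset.sum_congr rfl fun V _ => hstep V, Finset.sum_comm]
  have hconst : ∀ U : CompleteFlag F n,
      (∑ V : CompleteFlag F n,
        if ((∀ j, j ≠ i → V.toFun j = W.toFun j) ∧ V.toFun i ≠ W.toFun i) ∧
           ((∀ j, j ≠ i → U.toFun j = V.toFun j) ∧ U.toFun i ≠ V.toFun i) then f U else 0)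
      = ((univ.filter fun V : CompleteFlag F n =>
          ((∀ j, j ≠ i → V.toFun j = W.toFun j) ∧ V.toFun i ≠ W.toFun i) ∧
          ((∀ j, j ≠ i → U.toFun j = V.toFun j) ∧ U.toFun i ≠ V.toFun i)).card : ℚ) * f U := by
    intro U
    rw [← Finset.sum_filter, Finset.sum_const, nsmul_eq_mul]
  rw [Finset.sum_congr rfl fun U _ => hconst U]
  have hRHS : ((q : ℚ) - 1) * (∑ V : CompleteFlag F n,
        if (∀ j, j ≠ i → V.toFun j = W.toFun j) ∧ V.toFun i ≠ W.toFun i then f V else 0)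
        + (q : ℚ) * f W
      = ∑ U : CompleteFlag F n,
          (((q : ℚ) - 1) *
            (if (∀ j, j ≠ i → U.toFun j = W.toFun j) ∧ U.toFun i ≠ W.toFun i then f U else 0)
          + (if U = W then (q : ℚ) * f U else 0)) := by
    rw [Finset.sum_add_distrib, ← Finset.mul_sum, Finset.sum_ite_eq' univ W
      (fun U => (q : ℚ) * f U)]
    simp
  rw [hRHS]
  apply Finset.sum_congr rfl
  intro U _
  by_cases hUW : U = W
  · subst hUW
    have hnot : ¬ ((∀ j, j ≠ i → U.toFun j = U.toFun j) ∧ U.toFun i ≠ U.toFun i) :=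
      fun h => h.2 rfl
    rw [if_neg hnot, if_pos rfl]
    have hcard : (univ.filter fun V : CompleteFlag F n =>
        ((∀ j, j ≠ i → V.toFun j = U.toFun j) ∧ V.toFun i ≠ U.toFun i) ∧
        ((∀ j, j ≠ i → U.toFun j = V.toFun j) ∧ U.toFun i ≠ V.toFun i)).card = q := by
      have hsetEq : (univ.filter fun V : CompleteFlag F n =>
          ((∀ j, j ≠ i → V.toFun j = U.toFun j) ∧ V.toFun i ≠ U.toFun i) ∧
          ((∀ j, j ≠ i → U.toFun j = V.toFun j) ∧ U.toFun i ≠ V.toFun i))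
          = (univ.filter fun V : CompleteFlag F n =>
              ∀ j, j ≠ i → V.toFun j = U.toFun j).erase U := by
        ext V
        simp only [Finset.mem_filter, Finset.mem_univ, true_and, Finset.mem_erase]
        constructor
        · rintro ⟨⟨h1, h2⟩, -⟩
          exact ⟨fun hVW => h2 (by rw [hVW]), h1⟩
        · rintro ⟨hne, h1⟩
          have h2 : V.toFun i ≠ U.toFun i := fun he => hne (flag_eq V U h1 he)
          exact ⟨⟨h1, h2⟩, ⟨fun j hj => (h1 j hj).symm, fun he => h2 he.symm⟩⟩
      rw [hsetEq, Finset.card_erase_of_mem (by simp), hFullcard]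
      omega
    rw [hcard]
    ring
  · by_cases hRUW : (∀ j, j ≠ i → U.toFun j = W.toFun j) ∧ U.toFun i ≠ W.toFun i
    · rw [if_pos hRUW, if_neg hUW]
      have hcard : (univ.filter fun V : CompleteFlag F n =>
          ((∀ j, j ≠ i → V.toFun j = W.toFun j) ∧ V.toFun i ≠ W.toFun i) ∧
          ((∀ j, j ≠ i → U.toFun j = V.toFun j) ∧ U.toFun i ≠ V.toFun i)).card = q - 1 := by
        have hsetEq : (univ.filter fun V : CompleteFlag F n =>
            ((∀ j, j ≠ i → V.toFun j = W.toFun j) ∧ V.toFun i ≠ W.toFun i) ∧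
            ((∀ j, j ≠ i → U.toFun j = V.toFun j) ∧ U.toFun i ≠ V.toFun i))
            = (univ.filter fun V : CompleteFlag F n =>
                ∀ j, j ≠ i → V.toFun j = W.toFun j) \ {U, W} := by
          ext V
          simp only [Finset.mem_filter, Finset.mem_univ, true_and, Finset.mem_sdiff,
            Finset.mem_insert, Finset.mem_singleton, not_or]
          constructor
          · rintro ⟨⟨h1, h2⟩, h3, h4⟩
            exact ⟨h1, fun he => h4 (by rw [he]), fun he => h2 (by rw [he])⟩
          · rintro ⟨h1, hVU, hVW⟩
            have h2 : V.toFun i ≠ W.toFun i := fun he => hVW (flag_eq V W h1 he)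
            have h3 : ∀ j, j ≠ i → U.toFun j = V.toFun j :=
              fun j hj => (hRUW.1 j hj).trans (h1 j hj).symm
            have h4 : U.toFun i ≠ V.toFun i :=
              fun he => hVU (flag_eq V U (fun j hj => (h3 j hj).symm) he.symm)
            exact ⟨⟨h1, h2⟩, h3, h4⟩
        have hUW2 : ({U, W} : Finset (CompleteFlag F n)).card = 2 := by
          rw [Finset.card_insert_of_notMem (by simpa using hUW), Finset.card_singleton]
        have hsub : ({U, W} : Finset (CompleteFlag F n))
            ⊆ univ.filter fun V : CompleteFlag F n => ∀ j, j ≠ i → V.toFun j = W.toFun j := by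
          intro V hV
          simp only [Finset.mem_insert, Finset.mem_singleton] at hV
          rcases hV with rfl | rfl
          · simp only [Finset.mem_filter, Finset.mem_univ, true_and]
            exact hRUW.1
          · simp
        rw [hsetEq, Finset.card_sdiff_of_subset hsub, hFullcard, hUW2]
        omega
      rw [hcard, Nat.cast_sub hq1, Nat.cast_one]
      ring
    · rw [if_neg hRUW, if_neg hUW]
      have hcard : (univ.filter fun V : CompleteFlag F n =>
          ((∀ j, j ≠ i → V.toFun j = W.toFun j) ∧ V.toFun i ≠ W.toFun i) ∧
          ((∀ j, j ≠ i → U.toFun j = V.toFun j) ∧ U.toFun i ≠ V.toFun i)).card = 0 := by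
        rw [Finset.card_eq_zero, Finset.filter_eq_empty_iff]
        rintro V - ⟨⟨h1, h2⟩, h3, h4⟩
        by_cases he : U.toFun i = W.toFun i
        · exact hUW (flag_eq U W (fun j hj => (h3 j hj).trans (h1 j hj)) he)
        · exact hRUW ⟨fun j hj => (h3 j hj).trans (h1 j hj), he⟩
      rw [hcard]
      simp
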